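/- arXiv:2011.09866 — 2 statements merged into one kernel-verified Lean document; each statement's English description precedes it below -/
import Mathlib

section
/- [TxtPsdEx_C]_REC = [TxtGEx_C]_REC; that is, a class of recursive languages is Ex_C-learnable by a partial computable partially set-driven learner if and only if it is Ex_C-learnable by a partial computable Gold-style (full-information) learner. -/
namespace InductiveInference

/-- `φ_e` : the `e`-th partial computable function, via the standard numbering
of `Nat.Partrec.Code`. -/
def phi (e : ℕ) : ℕ →. ℕ := (Denumerable.ofNat Nat.Partrec.Code e).eval

/-- `W_e` : the domain of `φ_e`. -/
def Wset (e : ℕ) : Set ℕ := (phi e).Dom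

/-- `e` is a C-index: `φ_e` is total with values in `{0,1}`. -/
def CIndex (e : ℕ) : Prop := ∀ x, phi e x = Part.some 0 ∨ phi e x = Part.some 1

/-- `C_e = {x | φ_e x = 1}`. -/
def Cset (e : ℕ) : Set ℕ := {x | phi e x = Part.some 1}

/-- A language is recursive (decidable). -/
def RecLang (L : Set ℕ) : Prop := ∃ f : ℕ → Bool, Computable f ∧ ∀ x, x ∈ L ↔ f x = true

/-- Texts: total functions `ℕ → ℕ ∪ {#}`; `none` is the pause symbol `#`. -/
abbrev Text := ℕ → Option ℕ

/-- The content of a text: its range minus the pause symbol. -/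
def content (T : Text) : Set ℕ := {x | ∃ n, T n = some x}

/-- The initial segment `T[n] = (T 0, …, T (n-1))`. -/
def initSeg (T : Text) (n : ℕ) : List (Option ℕ) := (List.range n).map T

/-- The (finite) content of the initial segment `T[n]`. -/
def fincontent (T : Text) (n : ℕ) : Finset ℕ := ((initSeg T n).filterMap id).toFinset

/-- A canonical numerical code for a finite set of naturals. -/
def setCode (D : Finset ℕ) : ℕ := Encodable.encode (D.sort (· ≤ ·))

/-- Learners: partial functions on (suitably coded) natural number inputs. -/
abbrev Learner := ℕ →. ℕ

/-- The learner is partial computable. -/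
def PartComputable (h : Learner) : Prop := Nat.Partrec h

/-- The learner is total computable. -/
def TotalComputable (h : Learner) : Prop := Nat.Partrec h ∧ ∀ x, (h x).Dom

/-- Hypothesis sequences (possibly undefined at some points). -/
abbrev HypSeq := ℕ → Part ℕ

/-- Gold-style (full-information) learning: `G(h,T)(i) = h(T[i])`. -/
def Gop (h : Learner) (T : Text) (i : ℕ) : Part ℕ :=
  h (Encodable.encode (initSeg T i))

/-- Partially set-driven learning: `Psd(h,T)(i) = h(content T[i], i)`. -/
def Psdop (h : Learner) (T : Text) (i : ℕ) : Part ℕ :=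
  h (Nat.pair (setCode (fincontent T i)) i)

/-- Set-driven learning: `Sd(h,T)(i) = h(content T[i])`. -/
def Sdop (h : Learner) (T : Text) (i : ℕ) : Part ℕ :=
  h (setCode (fincontent T i))

/-- Iterative learning: the input `none` codes the empty start sequence `ε`,
and `some (e, x)` codes the pair of previous hypothesis `e` and datum `x`. -/
def Itop (h : Learner) (T : Text) : ℕ → Part ℕ
  | 0 => h (Encodable.encode (none : Option (ℕ × Option ℕ)))
  | i + 1 => (Itop h T i).bind fun e =>
      h (Encodable.encode (some (e, T i) : Option (ℕ × Option ℕ)))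

/-- Transductive learning: the learner receives the single (coded) datum
`T i`; the output `0` codes the distinguished symbol `?`, and the output
`e + 1` codes the hypothesis `e`.  The value `?` of the hypothesis sequence
is represented by `Part.none`. -/
def Tdop (h : Learner) (T : Text) : ℕ → Part ℕ
  | 0 => Part.none
  | i + 1 => (h (Encodable.encode (T i))).bind fun v =>
      match v with
      | 0 => Tdop h T i
      | e + 1 => Part.some e

/-- `Ex_C`: syntactic convergence to a single correct C-index. -/
def ExC (p : HypSeq) (T : Text) : Prop :=
  ∃ n₀, (∀ n, n₀ ≤ n → p n = p n₀) ∧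
    ∃ e, p n₀ = Part.some e ∧ CIndex e ∧ Cset e = content T

/-- `Ex_W`: syntactic convergence to a single correct W-index. -/
def ExW (p : HypSeq) (T : Text) : Prop :=
  ∃ n₀, (∀ n, n₀ ≤ n → p n = p n₀) ∧
    ∃ e, p n₀ = Part.some e ∧ Wset e = content T

/-- `Bc_C`: semantic convergence to correct C-indices. -/
def BcC (p : HypSeq) (T : Text) : Prop :=
  ∃ n₀, ∀ n, n₀ ≤ n → ∃ e, p n = Part.some e ∧ CIndex e ∧ Cset e = content T

/-- `Bc_W`: semantic convergence to correct W-indices. -/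
def BcW (p : HypSeq) (T : Text) : Prop :=
  ∃ n₀, ∀ n, n₀ ≤ n → ∃ e, p n = Part.some e ∧ Wset e = content T

/-- `CInd`: every hypothesis output is a C-index. -/
def CIndRes (p : HypSeq) (_T : Text) : Prop :=
  ∀ i e, p i = Part.some e → CIndex e

/-- `T`: the always-true restriction. -/
def TrueRes (_p : HypSeq) (_T : Text) : Prop := True

abbrev InteractionOp := Learner → Text → HypSeq
abbrev Restriction := HypSeq → Text → Prop

/-- Conjunction of restrictions. -/
def andRes (δ δ' : Restriction) : Restriction := fun p T => δ p T ∧ δ' p T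

/-- `h` `Txtβδ`-learns `L`: on every text for `L` the restriction `δ` holds. -/
def Learns (β : InteractionOp) (δ : Restriction) (h : Learner) (L : Set ℕ) : Prop :=
  ∀ T : Text, content T = L → δ (β h T) T

/-- The restriction `α` holds for `h` on all texts whatsoever. -/
def OnAllTexts (β : InteractionOp) (α : Restriction) (h : Learner) : Prop :=
  ∀ T : Text, α (β h T) T

/-- A class of recursive languages. -/
def IsRecClass (ℒ : Set (Set ℕ)) : Prop := ∀ L ∈ ℒ, RecLang L

/-- `[𝒞Txtβδ]_REC`: classes of recursive languages learnable by some
learner from `C` under interaction operator `β` and restriction `δ`. -/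
def LearnableREC (C : Learner → Prop) (β : InteractionOp) (δ : Restriction) :
    Set (Set (Set ℕ)) :=
  {ℒ | IsRecClass ℒ ∧ ∃ h, C h ∧ ∀ L ∈ ℒ, Learns β δ h L}

/-- `[τ(α)𝒞Txtβδ]_REC`: as above, where additionally `α` must hold on
arbitrary texts. -/
def TauLearnableREC (C : Learner → Prop) (α : Restriction) (β : InteractionOp)
    (δ : Restriction) : Set (Set (Set ℕ)) :=
  {ℒ | IsRecClass ℒ ∧ ∃ h, C h ∧ OnAllTexts β α h ∧ ∀ L ∈ ℒ, Learns β δ h L}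

/-! ### Auxiliary material for the proof -/

section Aux

open Encodable Denumerable

/-- Decode a natural number as a list over `Option ℕ`. -/
abbrev lo (n : ℕ) : List (Option ℕ) := Denumerable.ofNat (List (Option ℕ)) n

/-- A `filterMap` implementation of `List.take`. -/
def pref (σ : List (Option ℕ)) (k : ℕ) : List (Option ℕ) :=
  (List.range k).filterMap (fun j => σ[j]?)

lemma pref_eq_take (σ : List (Option ℕ)) (k : ℕ) : pref σ k = σ.take k := by
  induction k with
  | zero => simp [pref]
  | succ k ih =>
    rw [pref, List.range_succ, List.filterMap_append, List.take_succ, ← pref, ih]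
    cases h : σ[k]? <;> simp [List.filterMap_cons, h]

lemma encode_lo (m : ℕ) : Encodable.encode (lo m) = m := Denumerable.encode_ofNat _

lemma lo_encode (σ : List (Option ℕ)) : lo (Encodable.encode σ) = σ :=
  Denumerable.ofNat_encode σ

lemma length_le_encode (l : List (Option ℕ)) : l.length ≤ Encodable.encode l := by
  induction l with
  | nil => simp
  | cons a l ih =>
    rw [Encodable.encode_list_cons]
    have := Nat.right_le_pair (Encodable.encode a) (Encodable.encode l)
    simp only [List.length_cons]
    omega

/-- The totalized learner obtained from code `c`, with the input (qua number)
used as step bound: output the value of `c` on the longest halting prefix. -/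
def Gt (c : Nat.Partrec.Code) (n : ℕ) : ℕ :=
  (((List.range ((lo n).length + 1)).reverse.filterMap
      (fun k => Nat.Partrec.Code.evaln n c (Encodable.encode (pref (lo n) k)))).head?).getD 0

/-- Boolean membership in a list of naturals. -/
def memB (l : List ℕ) (x : ℕ) : Bool := decide (l.idxOf x < l.length)

lemma memB_iff {l : List ℕ} {x : ℕ} : memB l x = true ↔ x ∈ l := by
  simp [memB, List.idxOf_lt_length_iff]

/-- Boolean universal quantification over a list. -/
def allB (p : ℕ → Bool) (l : List ℕ) : Bool := l.foldr (fun b r => p b && r) true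

lemma allB_iff {p : ℕ → Bool} {l : List ℕ} : allB p l = true ↔ ∀ x ∈ l, p x = true := by
  induction l with
  | nil => simp [allB]
  | cons a l ih => simp [allB, List.foldr_cons] at ih ⊢; tauto

/-- Boolean test that the content of `σ` is contained in `l`. -/
def subB (l : List ℕ) (σ : List (Option ℕ)) : Bool := allB (memB l) (σ.filterMap id)

lemma subB_iff {l : List ℕ} {σ : List (Option ℕ)} :
    subB l σ = true ↔ ∀ x : ℕ, some x ∈ σ → x ∈ l := by
  simp only [subB, allB_iff]
  constructor
  · intro h x hx
    exact memB_iff.1 (h x (by simpa using List.mem_filterMap.2 ⟨some x, hx, rfl⟩))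
  · intro h x hx
    rcases List.mem_filterMap.1 hx with ⟨a, ha, rfl⟩
    exact memB_iff.2 (h _ ha)

/-- Candidate test: `lo m` is a plausible locking sequence for data `l`, bound `t`. -/
def candB (c : Nat.Partrec.Code) (l : List ℕ) (t m : ℕ) : Bool :=
  subB l (lo m) && decide ((lo m).length ≤ t) &&
    allB (fun k =>
      !(subB l (lo k) && decide ((lo m).length + (lo k).length ≤ t))
        || decide (Gt c (Encodable.encode (lo m ++ lo k)) = Gt c m)) (List.range t)

/-- The partially set-driven learner built from code `c`. -/
def F2 (c : Nat.Partrec.Code) (n : ℕ) : ℕ :=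
  (((List.range n.unpair.2).filterMap (fun m =>
      bif candB c (Denumerable.ofNat (List ℕ) n.unpair.1) n.unpair.2 m
        then some (Gt c m) else none)).head?).getD 0

lemma primrec_Gt (c : Nat.Partrec.Code) : Primrec (Gt c) := by
  have hlo : Primrec lo := Primrec.ofNat (List (Option ℕ))
  have hf : Primrec (fun n : ℕ => (List.range ((lo n).length + 1)).reverse) :=
    Primrec.list_reverse.comp (Primrec.list_range.comp
      (Primrec.succ.comp (Primrec.list_length.comp hlo)))
  have hpref : Primrec (fun p : ℕ × ℕ => pref (lo p.1) p.2) := by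
    have hg : Primrec₂ (fun (p : ℕ × ℕ) (j : ℕ) => (lo p.1)[j]?) :=
      Primrec.to₂ (Primrec.list_getElem?.comp (hlo.comp (Primrec.fst.comp Primrec.fst))
        Primrec.snd)
    exact (Primrec.listFilterMap (Primrec.list_range.comp Primrec.snd) hg).of_eq fun p => rfl
  have hev : Primrec (fun p : ℕ × ℕ =>
      Nat.Partrec.Code.evaln p.1 c (Encodable.encode (pref (lo p.1) p.2))) :=
    (Nat.Partrec.Code.primrec_evaln.comp
      ((Primrec.fst.pair (Primrec.const c)).pair (Primrec.encode.comp hpref))).of_eq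
      fun p => rfl
  have hfm : Primrec (fun n : ℕ => (List.range ((lo n).length + 1)).reverse.filterMap
      (fun k => Nat.Partrec.Code.evaln n c (Encodable.encode (pref (lo n) k)))) :=
    Primrec.listFilterMap hf (Primrec.to₂ hev)
  exact ((Primrec.option_getD.comp (Primrec.list_head?.comp hfm) (Primrec.const 0))).of_eq
    fun n => rfl

lemma primrec_memB : Primrec (fun p : List ℕ × ℕ => memB p.1 p.2) :=
  (Primrec.nat_lt.comp (Primrec.list_idxOf.comp Primrec.snd Primrec.fst)
    (Primrec.list_length.comp Primrec.fst)).decide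

lemma primrec_subB : Primrec (fun p : List ℕ × List (Option ℕ) => subB p.1 p.2) := by
  have hfm : Primrec (fun p : List ℕ × List (Option ℕ) => p.2.filterMap id) :=
    (Primrec.listFilterMap Primrec.snd Primrec₂.right).of_eq fun p => rfl
  have hh : Primrec₂ (fun (p : List ℕ × List (Option ℕ)) (q : ℕ × Bool) =>
      memB p.1 q.1 && q.2) :=
    Primrec.to₂ (Primrec.and.comp
      (primrec_memB.comp ((Primrec.fst.comp Primrec.fst).pair (Primrec.fst.comp Primrec.snd)))
      (Primrec.snd.comp Primrec.snd))
  exact (Primrec.list_foldr hfm (Primrec.const true) hh).of_eq fun p => rfl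

lemma primrec_candB (c : Nat.Partrec.Code) :
    Primrec (fun q : (List ℕ × ℕ) × ℕ => candB c q.1.1 q.1.2 q.2) := by
  have hlo : Primrec lo := Primrec.ofNat (List (Option ℕ))
  have hGt := primrec_Gt c
  have hA : Primrec (fun q : (List ℕ × ℕ) × ℕ => subB q.1.1 (lo q.2)) :=
    primrec_subB.comp ((Primrec.fst.comp Primrec.fst).pair (hlo.comp Primrec.snd))
  have hB : Primrec (fun q : (List ℕ × ℕ) × ℕ => decide ((lo q.2).length ≤ q.1.2)) :=
    (Primrec.nat_le.comp (Primrec.list_length.comp (hlo.comp Primrec.snd))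
      (Primrec.snd.comp Primrec.fst)).decide
  have hstep : Primrec (fun r : ((List ℕ × ℕ) × ℕ) × (ℕ × Bool) =>
      ((!(subB r.1.1.1 (lo r.2.1) && decide ((lo r.1.2).length + (lo r.2.1).length ≤ r.1.1.2))
        || decide (Gt c (Encodable.encode (lo r.1.2 ++ lo r.2.1)) = Gt c r.1.2)) && r.2.2)) := by
    have hsub2 : Primrec (fun r : ((List ℕ × ℕ) × ℕ) × (ℕ × Bool) =>
        subB r.1.1.1 (lo r.2.1)) :=
      primrec_subB.comp ((Primrec.fst.comp (Primrec.fst.comp Primrec.fst)).pair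
        (hlo.comp (Primrec.fst.comp Primrec.snd)))
    have hlen2 : Primrec (fun r : ((List ℕ × ℕ) × ℕ) × (ℕ × Bool) =>
        decide ((lo r.1.2).length + (lo r.2.1).length ≤ r.1.1.2)) :=
      (Primrec.nat_le.comp
        (Primrec.nat_add.comp
          (Primrec.list_length.comp (hlo.comp (Primrec.snd.comp Primrec.fst)))
          (Primrec.list_length.comp (hlo.comp (Primrec.fst.comp Primrec.snd))))
        (Primrec.snd.comp (Primrec.fst.comp Primrec.fst))).decide
    have heqb : Primrec (fun r : ((List ℕ × ℕ) × ℕ) × (ℕ × Bool) =>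
        decide (Gt c (Encodable.encode (lo r.1.2 ++ lo r.2.1)) = Gt c r.1.2)) :=
      (Primrec.eq.comp
        (hGt.comp (Primrec.encode.comp (Primrec.list_append.comp
          (hlo.comp (Primrec.snd.comp Primrec.fst)) (hlo.comp (Primrec.fst.comp Primrec.snd)))))
        (hGt.comp (Primrec.snd.comp Primrec.fst))).decide
    exact Primrec.and.comp
      (Primrec.or.comp (Primrec.not.comp (Primrec.and.comp hsub2 hlen2)) heqb)
      (Primrec.snd.comp Primrec.snd)
  have hC : Primrec (fun q : (List ℕ × ℕ) × ℕ => allB (fun k =>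
      !(subB q.1.1 (lo k) && decide ((lo q.2).length + (lo k).length ≤ q.1.2))
        || decide (Gt c (Encodable.encode (lo q.2 ++ lo k)) = Gt c q.2)) (List.range q.1.2)) :=
    (Primrec.list_foldr (Primrec.list_range.comp (Primrec.snd.comp Primrec.fst))
      (Primrec.const true) (Primrec.to₂ hstep)).of_eq fun q => rfl
  exact (Primrec.and.comp (Primrec.and.comp hA hB) hC).of_eq fun q => rfl

lemma primrec_F2 (c : Nat.Partrec.Code) : Primrec (F2 c) := by
  have hGt := primrec_Gt c
  have hcand := primrec_candB c
  have hinner : Primrec₂ (fun (n m : ℕ) =>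
      bif candB c (Denumerable.ofNat (List ℕ) n.unpair.1) n.unpair.2 m
        then some (Gt c m) else none) :=
    Primrec.to₂ (Primrec.cond
      (hcand.comp ((((Primrec.ofNat (List ℕ)).comp
          (Primrec.fst.comp (Primrec.unpair.comp Primrec.fst))).pair
        (Primrec.snd.comp (Primrec.unpair.comp Primrec.fst))).pair Primrec.snd))
      (Primrec.option_some.comp (hGt.comp Primrec.snd)) (Primrec.const none))
  have hfm : Primrec (fun n : ℕ => (List.range n.unpair.2).filterMap (fun m =>
      bif candB c (Denumerable.ofNat (List ℕ) n.unpair.1) n.unpair.2 m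
        then some (Gt c m) else none)) :=
    Primrec.listFilterMap (Primrec.list_range.comp (Primrec.snd.comp Primrec.unpair)) hinner
  exact ((Primrec.option_getD.comp (Primrec.list_head?.comp hfm) (Primrec.const 0))).of_eq
    fun n => rfl

/-- A sorted duplicate-free listing of the elements of `l`. -/
def sortOf (l : List ℕ) : List ℕ :=
  (List.range (l.foldr max 0 + 1)).filterMap (fun x => bif memB l x then some x else none)

lemma filterMap_bif (p : ℕ → Bool) (L : List ℕ) :
    L.filterMap (fun x => bif p x then some x else none) = L.filter p := by
  induction L with
  | nil => rfl
  | cons a L ih =>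
    cases h : p a <;> simp [List.filterMap_cons, List.filter_cons, h, ih]

lemma le_foldr_max {l : List ℕ} {x : ℕ} (h : x ∈ l) : x ≤ l.foldr max 0 := by
  induction l with
  | nil => cases h
  | cons a l ih =>
    rcases List.mem_cons.1 h with rfl | h
    · simp [List.foldr_cons]
    · simp only [List.foldr_cons]
      exact le_trans (ih h) (le_max_right _ _)

lemma sortOf_eq_sort (l : List ℕ) : sortOf l = l.toFinset.sort (· ≤ ·) := by
  have hfil : sortOf l = (List.range (l.foldr max 0 + 1)).filter (fun x => memB l x) :=
    filterMap_bif _ _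
  have hp : (sortOf l).Pairwise (· < ·) := by
    rw [hfil]
    exact List.Pairwise.sublist List.filter_sublist List.pairwise_lt_range
  apply List.Perm.eq_of_pairwise' (r := (· ≤ ·)) (hp.imp le_of_lt) (Finset.pairwise_sort _ _) ?_
  apply (List.perm_ext_iff_of_nodup (hp.imp ne_of_lt) (Finset.sort_nodup _ _)).2
  intro a
  rw [hfil]
  simp only [List.mem_filter, List.mem_range, memB_iff, Finset.mem_sort, List.mem_toFinset]
  constructor
  · exact fun h => h.2
  · exact fun h => ⟨Nat.lt_succ_of_le (le_foldr_max h), h⟩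

/-- The preprocessing map for the `Psd ⊆ G` direction. -/
def F1 (n : ℕ) : ℕ :=
  Nat.pair (Encodable.encode (sortOf ((lo n).filterMap id))) (lo n).length

lemma primrec_F1 : Primrec F1 := by
  have hlo : Primrec lo := Primrec.ofNat (List (Option ℕ))
  have hfm : Primrec (fun n : ℕ => (lo n).filterMap id) :=
    (Primrec.listFilterMap hlo Primrec₂.right).of_eq fun n => rfl
  have hfold : Primrec (fun l : List ℕ => l.foldr max 0) :=
    (Primrec.list_foldr Primrec.id (Primrec.const 0)
      (Primrec.to₂ (Primrec.nat_max.comp (Primrec.fst.comp Primrec.snd)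
        (Primrec.snd.comp Primrec.snd)))).of_eq fun l => rfl
  have hmem2 : Primrec₂ (fun (l : List ℕ) (x : ℕ) => bif memB l x then some x else none) :=
    Primrec.to₂ (Primrec.cond primrec_memB (Primrec.option_some.comp Primrec.snd)
      (Primrec.const none))
  have hsort : Primrec sortOf :=
    (Primrec.listFilterMap (Primrec.list_range.comp (Primrec.succ.comp hfold)) hmem2).of_eq
      fun l => rfl
  exact (Primrec₂.natPair.comp (Primrec.encode.comp (hsort.comp hfm))
    (Primrec.list_length.comp hlo)).of_eq fun n => rfl

end Aux

section Math

open Encodable Denumerable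

/-- Total Gold-style learning of `L` by a total function, with correct limits. -/
def GLearn (G : ℕ → ℕ) (L : Set ℕ) : Prop :=
  ∀ T : Text, content T = L →
    ∃ e N, (∀ n, N ≤ n → G (Encodable.encode (initSeg T n)) = e) ∧ CIndex e ∧ Cset e = L

/-- `σ` is a locking sequence for `G` on `L`. -/
def lockSeq (G : ℕ → ℕ) (L : Set ℕ) (σ : List (Option ℕ)) : Prop :=
  (∀ x : ℕ, some x ∈ σ → x ∈ L) ∧
    ∀ τ : List (Option ℕ), (∀ x : ℕ, some x ∈ τ → x ∈ L) →
      G (Encodable.encode (σ ++ τ)) = G (Encodable.encode σ)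

lemma exists_text (L : Set ℕ) : ∃ T : Text, content T = L := by
  classical
  by_cases h : L = ∅
  · refine ⟨fun _ => none, ?_⟩
    ext x; simp [content, h]
  · obtain ⟨x₀, hx₀⟩ := Set.nonempty_iff_ne_empty.2 h
    refine ⟨fun n => if n ∈ L then some n else some x₀, ?_⟩
    ext x
    simp only [content, Set.mem_setOf_eq]
    constructor
    · rintro ⟨n, hn⟩
      split_ifs at hn with h'
      · cases hn; exact h'
      · cases hn; exact hx₀
    · intro hx; exact ⟨x, by simp [hx]⟩

/-- Appending a finite sequence in front of a text. -/
def appT (σ : List (Option ℕ)) (T : Text) : Text := fun i =>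
  if h : i < σ.length then σ[i] else T (i - σ.length)

lemma initSeg_appT (σ : List (Option ℕ)) (T : Text) {n : ℕ} (h : σ.length ≤ n) :
    initSeg (appT σ T) n = σ ++ initSeg T (n - σ.length) := by
  apply List.ext_getElem
  · simp [initSeg]; omega
  intro i h1 h2
  simp only [initSeg, List.length_map, List.length_range] at h1
  by_cases hi : i < σ.length
  · rw [List.getElem_append_left hi]
    simp [initSeg, appT, hi]
  · rw [List.getElem_append_right (le_of_not_gt hi)]
    simp [initSeg, appT, hi]

lemma content_appT (σ : List (Option ℕ)) (T : Text) :
    content (appT σ T) = {x | some x ∈ σ} ∪ content T := by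
  ext x
  simp only [content, Set.mem_union, Set.mem_setOf_eq]
  constructor
  · rintro ⟨i, hi⟩
    by_cases h : i < σ.length
    · left; rw [appT, dif_pos h] at hi; rw [← hi]; exact List.getElem_mem h
    · right; rw [appT, dif_neg h] at hi; exact ⟨_, hi⟩
  · rintro (h | ⟨n, hn⟩)
    · obtain ⟨i, hlt, heq⟩ := List.getElem_of_mem h
      exact ⟨i, by rw [appT, dif_pos hlt]; exact heq⟩
    · refine ⟨σ.length + n, ?_⟩
      rw [appT, dif_neg (by omega)]
      simpa using hn

lemma initSeg_take {T : Text} {k n : ℕ} (h : k ≤ n) :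
    (initSeg T n).take k = initSeg T k := by
  simp [initSeg, ← List.map_take, List.take_range, Nat.min_eq_left h]

/-- Existence of a locking sequence (Blum–Blum style). -/
lemma exists_lock {G : ℕ → ℕ} {L : Set ℕ}
    (hconv : ∀ T : Text, content T = L →
      ∃ e N, ∀ n, N ≤ n → G (Encodable.encode (initSeg T n)) = e) :
    ∃ σ, lockSeq G L σ := by
  classical
  by_contra hno
  push_neg at hno
  obtain ⟨TL, hTL⟩ := exists_text L
  have wit : ∀ σ : List (Option ℕ), (∀ x : ℕ, some x ∈ σ → x ∈ L) →
      ∃ τ, (∀ x : ℕ, some x ∈ τ → x ∈ L) ∧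
        G (Encodable.encode (σ ++ τ)) ≠ G (Encodable.encode σ) := by
    intro σ hσ
    have h := hno σ
    rw [lockSeq] at h
    push_neg at h
    exact h hσ
  set ext : List (Option ℕ) → List (Option ℕ) := fun σ =>
    if h : ∀ x : ℕ, some x ∈ σ → x ∈ L then (wit σ h).choose else [] with hext
  set chain : ℕ → List (Option ℕ) := fun n => Nat.rec [] (fun n σ =>
      (σ ++ [TL n]) ++ ext (σ ++ [TL n])) n with hchain
  have chain_succ : ∀ n, chain (n + 1) = (chain n ++ [TL n]) ++ ext (chain n ++ [TL n]) :=
    fun n => rfl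
  have hTLmem : ∀ (n : ℕ) (x : ℕ), TL n = some x → x ∈ L := by
    intro n x h; rw [← hTL]; exact ⟨n, h⟩
  have hok : ∀ n, ∀ x : ℕ, some x ∈ chain n → x ∈ L := by
    intro n
    induction n with
    | zero => intro x hx; simp [hchain] at hx
    | succ n ih =>
      have hok' : ∀ y : ℕ, some y ∈ chain n ++ [TL n] → y ∈ L := by
        intro y hy
        rcases List.mem_append.1 hy with hy | hy
        · exact ih y hy
        · exact hTLmem n y ((by simpa using hy : some y = TL n).symm)
      intro x hx
      rw [chain_succ] at hx
      rcases List.mem_append.1 hx with hx | hx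
      · exact hok' x hx
      · rw [show ext (chain n ++ [TL n]) = (wit _ hok').choose from dif_pos hok'] at hx
        exact (wit _ hok').choose_spec.1 x hx
  have hokmid : ∀ n, ∀ y : ℕ, some y ∈ chain n ++ [TL n] → y ∈ L := by
    intro n y hy
    rcases List.mem_append.1 hy with hy | hy
    · exact hok n y hy
    · exact hTLmem n y ((by simpa using hy : some y = TL n).symm)
  have hchange : ∀ n,
      G (Encodable.encode (chain (n + 1))) ≠ G (Encodable.encode (chain n ++ [TL n])) := by
    intro n
    rw [chain_succ, show ext (chain n ++ [TL n]) = (wit _ (hokmid n)).choose from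
      dif_pos (hokmid n)]
    exact (wit _ (hokmid n)).choose_spec.2
  have hpref_succ : ∀ n, chain n <+: chain (n + 1) := fun n => by
    rw [chain_succ]
    exact (List.prefix_append _ _).trans (List.prefix_append _ _)
  have hpref : ∀ m n, m ≤ n → chain m <+: chain n := by
    intro m n h
    induction n, h using Nat.le_induction with
    | base => exact List.prefix_refl _
    | succ n hmn ih => exact ih.trans (hpref_succ n)
  have hlen : ∀ n, n ≤ (chain n).length := by
    intro n
    induction n with
    | zero => simp
    | succ n ih =>
      rw [chain_succ]
      simp only [List.length_append, List.length_cons, List.length_nil]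
      omega
  set T : Text := fun i => (chain (i + 1)).getD i none with hTdef
  have hTval : ∀ n i, ∀ hi : i < (chain n).length, T i = (chain n)[i] := by
    intro n i hi
    have hi1 : i < (chain (i + 1)).length := lt_of_lt_of_le (Nat.lt_succ_self i) (hlen (i + 1))
    show (chain (i + 1)).getD i none = _
    rw [List.getD_eq_getElem _ _ hi1]
    rcases le_total n (i + 1) with h | h
    · exact ((hpref n (i + 1) h).getElem hi).symm
    · exact (hpref (i + 1) n h).getElem hi1
  have hinit : ∀ (l : List (Option ℕ)) n, l <+: chain n → initSeg T l.length = l := by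
    intro l n hl
    apply List.ext_getElem
    · simp [initSeg]
    intro i h1 h2
    simp only [initSeg, List.getElem_map, List.getElem_range]
    have hi : i < (chain n).length := lt_of_lt_of_le h2 hl.length_le
    rw [hTval n i hi]
    exact (hl.getElem h2).symm
  have hcont : content T = L := by
    ext x
    constructor
    · rintro ⟨i, hi⟩
      have hi1 : i < (chain (i + 1)).length :=
        lt_of_lt_of_le (Nat.lt_succ_self i) (hlen (i + 1))
      have hx : (chain (i + 1))[i] = some x := by
        rw [← List.getD_eq_getElem _ (none : Option ℕ) hi1]
        exact hi
      exact hok (i + 1) x (hx ▸ List.getElem_mem hi1)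
    · intro hx
      rw [← hTL] at hx
      obtain ⟨n, hn⟩ := hx
      refine ⟨(chain n).length, ?_⟩
      have h1 : (chain n).length < (chain n ++ [TL n]).length := by simp
      have hpfx : chain n ++ [TL n] <+: chain (n + 1) := by
        rw [chain_succ]; exact List.prefix_append _ _
      have hi1 : (chain n).length < (chain (n + 1)).length :=
        lt_of_lt_of_le h1 hpfx.length_le
      rw [hTval (n + 1) _ hi1, ← hpfx.getElem h1, List.getElem_concat_length]
      · exact hn
      · rfl
  obtain ⟨e, N, hN⟩ := hconv T hcont
  have hpfx : chain N ++ [TL N] <+: chain (N + 1) := by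
    rw [chain_succ]; exact List.prefix_append _ _
  have e1 : G (Encodable.encode (initSeg T (chain N ++ [TL N]).length)) = e := by
    apply hN
    have := hlen N
    simp only [List.length_append, List.length_cons, List.length_nil]
    omega
  have e2 : G (Encodable.encode (initSeg T (chain (N + 1)).length)) = e := by
    apply hN
    have := hlen (N + 1)
    omega
  rw [hinit (chain N ++ [TL N]) (N + 1) hpfx] at e1
  rw [hinit (chain (N + 1)) (N + 1) (List.prefix_refl _)] at e2
  exact hchange N (e2.trans e1.symm)

/-- Any locking sequence yields a correct hypothesis. -/
lemma lock_correct {G : ℕ → ℕ} {L : Set ℕ} (hG : GLearn G L)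
    {σ : List (Option ℕ)} (hσ : lockSeq G L σ) :
    CIndex (G (Encodable.encode σ)) ∧ Cset (G (Encodable.encode σ)) = L := by
  obtain ⟨TL, hTL⟩ := exists_text L
  have hcT : content (appT σ TL) = L := by
    rw [content_appT, hTL]
    apply Set.union_eq_self_of_subset_left
    intro x hx
    exact hσ.1 x hx
  obtain ⟨e, N, hconst, hC, hCset⟩ := hG (appT σ TL) hcT
  set n := max N σ.length with hn
  have h1 : initSeg (appT σ TL) n = σ ++ initSeg TL (n - σ.length) :=
    initSeg_appT σ TL (le_max_right _ _)
  have h2 : G (Encodable.encode (initSeg (appT σ TL) n)) = e := hconst n (le_max_left _ _)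
  have h3 : G (Encodable.encode σ) = e := by
    rw [h1] at h2
    rw [← h2]
    apply (hσ.2 (initSeg TL (n - σ.length)) ?_).symm
    intro x hx
    have : x ∈ content TL := by
      obtain ⟨i, hi, heq⟩ := by
        simpa [initSeg, List.mem_map] using hx
      exact ⟨i, heq⟩
    rwa [hTL] at this
  rw [h3]
  exact ⟨hC, hCset⟩

/-- Behaviour of `headD` on a reversed range: the value comes from the largest
defined index, which is at least any known defined index. -/
lemma headD_rev {P : ℕ → Option ℕ} {n k₀ v₀ : ℕ} (hk : k₀ ≤ n) (hP : P k₀ = some v₀) :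
    ∃ k, k₀ ≤ k ∧ k ≤ n ∧
      P k = some ((((List.range (n + 1)).reverse.filterMap P).head?).getD 0) := by
  induction n with
  | zero =>
    have hk0 : k₀ = 0 := Nat.le_zero.1 hk
    subst hk0
    refine ⟨0, le_refl _, le_refl _, ?_⟩
    rw [show List.range 1 = [0] from rfl]
    simp [List.filterMap_cons, hP]
  | succ n ih =>
    have hr : List.range (n + 2) = List.range (n + 1) ++ [n + 1] := by
      simpa using List.range_succ (n := n + 1)
    rw [hr, List.reverse_append]
    cases hPn : P (n + 1) with
    | some v =>
      refine ⟨n + 1, ?_, le_refl _, ?_⟩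
      · exact hk
      · simp [hPn, List.filterMap_cons]
    | none =>
      have hk' : k₀ ≤ n := by
        rcases Nat.lt_or_ge k₀ (n + 1) with h | h
        · omega
        · exfalso; have : k₀ = n + 1 := by omega
          rw [this, hPn] at hP; exact absurd hP (by simp)
      obtain ⟨k, h1, h2, h3⟩ := ih hk'
      refine ⟨k, h1, by omega, ?_⟩
      simpa [hPn, List.filterMap_cons] using h3

lemma headD_min {P : ℕ → Option ℕ} {t m v : ℕ} (hm : m < t) (hPm : P m = some v)
    (hlt : ∀ j, j < m → P j = none) :
    (((List.range t).filterMap P).head?).getD 0 = v := by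
  have ht : t = (m + 1) + (t - (m + 1)) := by omega
  rw [ht, List.range_add, List.filterMap_append]
  have h0 : (List.range m).filterMap P = [] := by
    apply List.filterMap_eq_nil_iff.2
    intro a ha
    exact hlt a (List.mem_range.1 ha)
  have h1 : (List.range (m + 1)).filterMap P = [v] := by
    rw [List.range_succ, List.filterMap_append, h0]
    simp [List.filterMap_cons, hPm]
  rw [h1]
  simp

/-- The totalized learner converges whenever the original learner converges. -/
lemma Gt_conv {c : Nat.Partrec.Code} {T : Text} {e n₀ : ℕ}
    (hn : ∀ n, n₀ ≤ n → c.eval (Encodable.encode (initSeg T n)) = Part.some e) :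
    ∃ N, ∀ n, N ≤ n → Gt c (Encodable.encode (initSeg T n)) = e := by
  have he : e ∈ c.eval (Encodable.encode (initSeg T n₀)) := by
    rw [hn n₀ (le_refl _)]; exact Part.mem_some e
  obtain ⟨k₀, hk₀⟩ := Nat.Partrec.Code.evaln_complete.1 he
  refine ⟨max (n₀ + 1) k₀, fun n hnN => ?_⟩
  have h1 : n₀ + 1 ≤ n := le_trans (le_max_left _ _) hnN
  have h2 : k₀ ≤ n := le_trans (le_max_right _ _) hnN
  set σ := initSeg T n with hσdef
  set x := Encodable.encode σ with hxdef
  have hlen : σ.length = n := by simp [hσdef, initSeg]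
  have hxge : n ≤ x := by rw [← hlen]; exact length_le_encode σ
  have hxk : k₀ ≤ x := le_trans h2 hxge
  have hlo : lo x = σ := ofNat_encode σ
  have hP : Nat.Partrec.Code.evaln x c (Encodable.encode (pref σ n₀)) = some e := by
    rw [pref_eq_take, hσdef, initSeg_take (by omega)]
    exact Nat.Partrec.Code.evaln_mono hxk hk₀
  obtain ⟨k, hk1, hk2, hk3⟩ := headD_rev
    (P := fun k => Nat.Partrec.Code.evaln x c (Encodable.encode (pref σ k)))
    (n := n) (by omega) hP
  have hval : Gt c x = (((List.range (n + 1)).reverse.filterMap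
      (fun k => Nat.Partrec.Code.evaln x c (Encodable.encode (pref σ k)))).head?).getD 0 := by
    rw [Gt, hlo, hlen]
  rw [hval]
  have hmem := Nat.Partrec.Code.evaln_sound (Option.mem_def.2 hk3)
  rw [pref_eq_take, hσdef, initSeg_take hk2, hn k (by omega)] at hmem
  exact Part.mem_some_iff.1 hmem

lemma mem_fincontent_iff {T : Text} {n x : ℕ} :
    x ∈ fincontent T n ↔ ∃ i, i < n ∧ T i = some x := by
  simp only [fincontent, List.mem_toFinset, List.mem_filterMap, initSeg, List.mem_map,
    List.mem_range, id_eq]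
  constructor
  · rintro ⟨a, ⟨i, hi, rfl⟩, ha⟩; exact ⟨i, hi, ha⟩
  · rintro ⟨i, hi, hT⟩; exact ⟨T i, ⟨i, hi, rfl⟩, hT⟩

lemma fincontent_mono {T : Text} {m n : ℕ} (h : m ≤ n) :
    fincontent T m ⊆ fincontent T n := by
  intro x hx
  obtain ⟨i, hi, hT⟩ := mem_fincontent_iff.1 hx
  exact mem_fincontent_iff.2 ⟨i, lt_of_lt_of_le hi h, hT⟩

lemma fincontent_subset {T : Text} {n : ℕ} : ↑(fincontent T n) ⊆ content T := by
  intro x hx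
  obtain ⟨i, _, hT⟩ := mem_fincontent_iff.1 (by exact_mod_cast hx)
  exact ⟨i, hT⟩

lemma mem_fincontent {T : Text} {x i : ℕ} (h : T i = some x) {n : ℕ} (hn : i < n) :
    x ∈ fincontent T n := by
  exact mem_fincontent_iff.2 ⟨i, hn, h⟩

lemma appear {T : Text} {lst : List ℕ} (h : ∀ x ∈ lst, x ∈ content T) :
    ∃ N, ∀ n, N ≤ n → ∀ x ∈ lst, x ∈ fincontent T n := by
  induction lst with
  | nil => exact ⟨0, by simp⟩
  | cons a l ih =>
    obtain ⟨i, hi⟩ := h a List.mem_cons_self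
    obtain ⟨N, hN⟩ := ih (fun x hx => h x (List.mem_cons_of_mem _ hx))
    refine ⟨max N (i + 1), fun n hn x hx => ?_⟩
    rcases List.mem_cons.1 hx with rfl | hx
    · exact mem_fincontent_iff.2 ⟨i, by omega, hi⟩
    · exact hN n (le_trans (le_max_left _ _) hn) x hx

lemma filterMap_id_mem {σ : List (Option ℕ)} {x : ℕ} :
    x ∈ σ.filterMap id ↔ some x ∈ σ := by
  simp [List.mem_filterMap]

lemma combine_bounds {Q : ℕ → ℕ → Prop} :
    ∀ k, (∀ m, m < k → ∃ Nm, ∀ n, Nm ≤ n → Q m n) →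
      ∃ N, ∀ m, m < k → ∀ n, N ≤ n → Q m n := by
  intro k
  induction k with
  | zero => exact fun _ => ⟨0, fun m hm => absurd hm (Nat.not_lt_zero m)⟩
  | succ k ih =>
    intro h
    obtain ⟨N₁, hN₁⟩ := ih (fun m hm => h m (by omega))
    obtain ⟨N₂, hN₂⟩ := h k (Nat.lt_succ_self k)
    refine ⟨max N₁ N₂, fun m hm n hn => ?_⟩
    rcases Nat.lt_or_ge m k with h' | h'
    · exact hN₁ m h' n (le_trans (le_max_left _ _) hn)
    · have hmk : m = k := by omega
      subst hmk
      exact hN₂ n (le_trans (le_max_right _ _) hn)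

/-- Key convergence lemma for the constructed partially set-driven learner. -/
lemma psd_conv {c : Nat.Partrec.Code} {L : Set ℕ} (hG : GLearn (Gt c) L)
    {T : Text} (hT : content T = L) :
    ∃ N e, (∀ n, N ≤ n → F2 c (Nat.pair (setCode (fincontent T n)) n) = e) ∧
      CIndex e ∧ Cset e = L := by
  classical
  have hconv : ∀ T' : Text, content T' = L →
      ∃ e N, ∀ n, N ≤ n → Gt c (Encodable.encode (initSeg T' n)) = e := by
    intro T' hT'
    obtain ⟨e, N, h1, _, _⟩ := hG T' hT'
    exact ⟨e, N, h1⟩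
  obtain ⟨σ₀, hσ₀⟩ := exists_lock hconv
  have hS : ∃ m, lockSeq (Gt c) L (lo m) := ⟨Encodable.encode σ₀, by rwa [lo_encode]⟩
  set m' := Nat.find hS with hm'def
  have hmlock : lockSeq (Gt c) L (lo m') := Nat.find_spec hS
  have hmin : ∀ m, m < m' → ¬ lockSeq (Gt c) L (lo m) := fun m hm => Nat.find_min hS hm
  have hencm' : Encodable.encode (lo m') = m' := encode_lo _
  set sl : ℕ → List ℕ := fun n => (fincontent T n).sort (· ≤ ·) with hsl
  have hslmem : ∀ n x, x ∈ sl n ↔ x ∈ fincontent T n := fun n x => Finset.mem_sort _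
  have hsub_of : ∀ (τ : List (Option ℕ)) (n : ℕ), subB (sl n) τ = true →
      ∀ x : ℕ, some x ∈ τ → x ∈ L := by
    intro τ n hs x hx
    have hmem := subB_iff.1 hs x hx
    rw [hslmem] at hmem
    rw [← hT]
    exact fincontent_subset hmem
  obtain ⟨N₁, hN₁⟩ := appear (T := T) (lst := (lo m').filterMap id)
    (fun x hx => by rw [hT]; exact hmlock.1 x (filterMap_id_mem.1 hx))
  have hdisq : ∀ m, m < m' → ∃ Nm, ∀ n, Nm ≤ n → candB c (sl n) n m = false := by
    intro m hm
    by_cases hA : ∀ x : ℕ, some x ∈ lo m → x ∈ L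
    · have h := hmin m hm
      rw [lockSeq] at h
      push_neg at h
      obtain ⟨τ, hτL, hτne⟩ := h hA
      rw [encode_lo] at hτne
      obtain ⟨N₂, hN₂⟩ := appear (T := T) (lst := τ.filterMap id)
        (fun x hx => by rw [hT]; exact hτL x (filterMap_id_mem.1 hx))
      refine ⟨max (max (Encodable.encode τ + 1) N₂) ((lo m).length + τ.length),
        fun n hn => ?_⟩
      have hb1 : Encodable.encode τ + 1 ≤ n :=
        le_trans (le_trans (le_max_left _ _) (le_max_left _ _)) hn
      have hb2 : N₂ ≤ n := le_trans (le_trans (le_max_right _ _) (le_max_left _ _)) hn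
      have hb3 : (lo m).length + τ.length ≤ n := le_trans (le_max_right _ _) hn
      have hfalse : allB (fun k =>
          !(subB (sl n) (lo k) && decide ((lo m).length + (lo k).length ≤ n))
            || decide (Gt c (Encodable.encode (lo m ++ lo k)) = Gt c m)) (List.range n) = false := by
        apply Bool.eq_false_iff.2
        intro hall
        have hk := allB_iff.1 hall (Encodable.encode τ) (List.mem_range.2 (by omega))
        rw [lo_encode] at hk
        have hsubτ : subB (sl n) τ = true := by
          apply subB_iff.2
          intro x hx
          rw [hslmem]
          exact hN₂ n hb2 x (filterMap_id_mem.2 hx)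
        have hble : decide ((lo m).length + τ.length ≤ n) = true := decide_eq_true hb3
        rw [hsubτ, hble] at hk
        simp only [Bool.and_self, Bool.not_true, Bool.false_or] at hk
        have heq : Gt c (Encodable.encode (lo m ++ τ)) = Gt c m := of_decide_eq_true hk
        exact hτne heq
      unfold candB
      rw [hfalse, Bool.and_false]
    · refine ⟨0, fun n _ => ?_⟩
      have hsub : subB (sl n) (lo m) = false := by
        apply Bool.eq_false_iff.2
        intro hs
        exact hA (hsub_of _ n hs)
      unfold candB
      rw [hsub, Bool.false_and, Bool.false_and]
  obtain ⟨N₃, hN₃⟩ := combine_bounds m' hdisq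
  refine ⟨max (max N₁ N₃) (max (m' + 1) (lo m').length), Gt c m', ?_, ?_, ?_⟩
  · intro n hn
    have hc1 : N₁ ≤ n := le_trans (le_trans (le_max_left _ _) (le_max_left _ _)) hn
    have hc2 : N₃ ≤ n := le_trans (le_trans (le_max_right _ _) (le_max_left _ _)) hn
    have hc3 : m' + 1 ≤ n := le_trans (le_trans (le_max_left _ _) (le_max_right _ _)) hn
    have hc4 : (lo m').length ≤ n := le_trans (le_trans (le_max_right _ _) (le_max_right _ _)) hn
    have hofn : Denumerable.ofNat (List ℕ) (setCode (fincontent T n)) = sl n := by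
      rw [setCode]; exact ofNat_encode _
    have hctrue : candB c (sl n) n m' = true := by
      unfold candB
      have h1 : subB (sl n) (lo m') = true := subB_iff.2 (fun x hx => by
        rw [hslmem]; exact hN₁ n hc1 x (filterMap_id_mem.2 hx))
      have h2 : decide ((lo m').length ≤ n) = true := decide_eq_true hc4
      have h3 : allB (fun k =>
          !(subB (sl n) (lo k) && decide ((lo m').length + (lo k).length ≤ n))
            || decide (Gt c (Encodable.encode (lo m' ++ lo k)) = Gt c m')) (List.range n) = true := by
        apply allB_iff.2
        intro k _
        by_cases hck : (subB (sl n) (lo k) && decide ((lo m').length + (lo k).length ≤ n)) = true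
        · have hsubk : subB (sl n) (lo k) = true := ((Bool.and_eq_true _ _).mp hck).1
          have heq : Gt c (Encodable.encode (lo m' ++ lo k)) = Gt c m' := by
            have := hmlock.2 (lo k) (hsub_of _ n hsubk)
            rwa [hencm'] at this
          rw [hck]
          simp [heq]
        · have hckf : (subB (sl n) (lo k) && decide ((lo m').length + (lo k).length ≤ n))
              = false := Bool.eq_false_iff.2 hck
          rw [hckf]
          simp
      rw [h1, h2, h3]
      rfl
    have hcfalse : ∀ j, j < m' → candB c (sl n) n j = false := fun j hj => hN₃ j hj n hc2
    unfold F2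
    rw [Nat.unpair_pair]
    simp only [hofn]
    exact headD_min (t := n) (m := m') (by omega)
      (by rw [hctrue]; rfl) (fun j hj => by rw [hcfalse j hj]; rfl)
  · have hcor := lock_correct hG hmlock
    rw [hencm'] at hcor
    exact hcor.1
  · have hcor := lock_correct hG hmlock
    rw [hencm'] at hcor
    exact hcor.2

end Math

/-- `[TxtPsdEx_C]_REC = [TxtGEx_C]_REC`. -/
theorem psd_exC_eq_g_exC :
    LearnableREC PartComputable Psdop ExC =
      LearnableREC PartComputable Gop ExC := by
  ext ℒ
  constructor
  · rintro ⟨hrec, h, hpc, hlearn⟩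
    refine ⟨hrec, fun n => h (F1 n), ?_, ?_⟩
    · have hp : Partrec h := Partrec.nat_iff.2 hpc
      exact Partrec.nat_iff.1 (hp.comp primrec_F1.to_comp)
    · intro L hL T hT
      have hkey : Gop (fun n => h (F1 n)) T = Psdop h T := by
        funext i
        show h (F1 (Encodable.encode (initSeg T i))) = h (Nat.pair (setCode (fincontent T i)) i)
        have hF : F1 (Encodable.encode (initSeg T i))
            = Nat.pair (setCode (fincontent T i)) i := by
          unfold F1
          rw [lo_encode]
          congr 1
          · rw [setCode, sortOf_eq_sort]
            rfl
          · simp [initSeg]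
        rw [hF]
      show ExC (Gop (fun n => h (F1 n)) T) T
      rw [hkey]
      exact hlearn L hL T hT
  · rintro ⟨hrec, h, hpc, hlearn⟩
    obtain ⟨c, hc⟩ := Nat.Partrec.Code.exists_code.1 hpc
    refine ⟨hrec, fun n => Part.some (F2 c n), ?_, ?_⟩
    · exact Partrec.nat_iff.1 ((primrec_F2 c).to_comp.partrec)
    · intro L hL T hT
      have hGL : GLearn (Gt c) L := by
        intro T' hT'
        obtain ⟨n₀, hconst, e, he, hC, hCs⟩ := hlearn L hL T' hT'
        have hev : ∀ n, n₀ ≤ n →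
            c.eval (Encodable.encode (initSeg T' n)) = Part.some e := by
          intro n hn
          have h1 := hconst n hn
          unfold Gop at h1 he
          rw [hc, h1, he]
        obtain ⟨N, hN⟩ := Gt_conv hev
        exact ⟨e, N, hN, hC, by rw [hCs, hT']⟩
      obtain ⟨N, e, hconv, hC, hCs⟩ := psd_conv hGL hT
      refine ⟨N, ?_, e, ?_, hC, by rw [hCs, hT]⟩
      · intro n hn
        show Part.some (F2 c (Nat.pair (setCode (fincontent T n)) n))
          = Part.some (F2 c (Nat.pair (setCode (fincontent T N)) N))
        rw [hconv n hn, hconv N (le_refl N)]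
      · show Part.some (F2 c (Nat.pair (setCode (fincontent T N)) N)) = Part.some e
        rw [hconv N (le_refl N)]

end InductiveInference
end

section
/- There exists a class ℒ of recursive languages such that ℒ ∈ [TxtItEx_C]_REC but ℒ ∉ [TxtTdEx_C]_REC; that is, some partial computable iterative learner Ex_C-learns every member of ℒ, but no partial computable transductive learner Ex_C-learns every member of ℒ. -/
namespace InductiveInference

/-! ### Auxiliary material for the separation -/

/-- Characteristic function of `{0}`. -/
def chi0 : ℕ → ℕ := fun x => if x = 0 then 1 else 0

/-- Characteristic function of `{0,1}`. -/
def chi1 : ℕ → ℕ := fun x => if x ≤ 1 then 1 else 0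

lemma chi0_comp : Computable chi0 :=
  Primrec.to_comp (Primrec.ite (Primrec.eq.comp Primrec.id (Primrec.const 0))
    (Primrec.const 1) (Primrec.const 0))

lemma chi1_comp : Computable chi1 :=
  Primrec.to_comp (Primrec.ite (Primrec.nat_le.comp Primrec.id (Primrec.const 1))
    (Primrec.const 1) (Primrec.const 0))

lemma phi_encode (c : Nat.Partrec.Code) : phi (Encodable.encode c) = c.eval := by
  simp [phi]

/-- The underlying total function of our iterative learner, with parameters the
two target indices. -/
def Hfun (E0 E1 : ℕ) : ℕ → ℕ := fun n =>
  if n = 0 then E0 else if (n - 1).unpair.2 = 2 then E1 else (n - 1).unpair.1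

lemma Hfun_comp (E0 E1 : ℕ) : Computable (Hfun E0 E1) := by
  have h1 : Primrec (fun n : ℕ => (n - 1).unpair.1) :=
    Primrec.fst.comp (Primrec.unpair.comp Primrec.pred)
  have h2 : Primrec (fun n : ℕ => (n - 1).unpair.2) :=
    Primrec.snd.comp (Primrec.unpair.comp Primrec.pred)
  exact Primrec.to_comp (Primrec.ite (Primrec.eq.comp Primrec.id (Primrec.const 0))
    (Primrec.const E0)
    (Primrec.ite (Primrec.eq.comp h2 (Primrec.const 2)) (Primrec.const E1) h1))

/-- The iterative learner. -/
def hIt (E0 E1 : ℕ) : Learner := fun n => Part.some (Hfun E0 E1 n)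

lemma hIt_partrec (E0 E1 : ℕ) : PartComputable (hIt E0 E1) :=
  Partrec.nat_iff.mp (Hfun_comp E0 E1)

/-- The intended hypothesis sequence of the iterative learner. -/
def Fseq (E0 E1 : ℕ) (T : Text) : ℕ → ℕ
  | 0 => E0
  | n + 1 => if T n = some 1 then E1 else Fseq E0 E1 T n

lemma encode_opt_eq_two (x : Option ℕ) : Encodable.encode x = 2 ↔ x = some 1 := by
  cases x with
  | none => simp [Encodable.encode]
  | some k =>
      show k + 1 = 2 ↔ some k = some 1
      rw [Option.some_inj]
      omega

lemma Itop_hIt (E0 E1 : ℕ) (T : Text) (n : ℕ) :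
    Itop (hIt E0 E1) T n = Part.some (Fseq E0 E1 T n) := by
  induction n with
  | zero =>
      show hIt E0 E1 (Encodable.encode (none : Option (ℕ × Option ℕ))) = _
      simp [hIt, Hfun, Fseq]
  | succ n ih =>
      show (Itop (hIt E0 E1) T n).bind _ = _
      rw [ih, Part.bind_some]
      have henc : Encodable.encode (some (Fseq E0 E1 T n, T n) : Option (ℕ × Option ℕ))
          = Nat.pair (Fseq E0 E1 T n) (Encodable.encode (T n)) + 1 := rfl
      show Part.some (Hfun E0 E1 _) = _
      rw [henc]
      simp only [Hfun, Nat.succ_ne_zero, if_false, Nat.add_sub_cancel, Nat.unpair_pair]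
      by_cases hx : T n = some 1
      · rw [if_pos ((encode_opt_eq_two (T n)).mpr hx)]
        simp [Fseq, hx]
      · rw [if_neg (fun h => hx ((encode_opt_eq_two (T n)).mp h))]
        simp [Fseq, hx]

/-- In the transductive model, any defined hypothesis on the all-`0` text
determines the value of the learner on datum `0`. -/
lemma td_all_zero (h : Learner) :
    ∀ n e, Tdop h (fun _ => some 0) n = Part.some e →
      h (Encodable.encode (some 0 : Option ℕ)) = Part.some (e + 1) := by
  intro n
  induction n with
  | zero =>
      intro e he
      exact absurd he.symm (Part.some_ne_none e)
  | succ n ih =>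
      intro e he
      rw [Part.eq_some_iff] at he
      have he' : e ∈ (h (Encodable.encode (some 0 : Option ℕ))).bind
          (fun v => match v with
            | 0 => Tdop h (fun _ => some 0) n
            | w + 1 => Part.some w) := he
      rw [Part.mem_bind_iff] at he'
      obtain ⟨v, hv, he⟩ := he'
      rcases v with _ | w
      · have h1 := ih e (Part.eq_some_iff.mpr he)
        rw [h1] at hv
        exact absurd (Part.mem_some_iff.mp hv) (by omega)
      · have hew : e = w := Part.mem_some_iff.mp he
        subst hew
        exact Part.eq_some_iff.mpr hv

lemma td_step (h : Learner) (w : ℕ)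
    (hc : h (Encodable.encode (some 0 : Option ℕ)) = Part.some (w + 1))
    (T : Text) (i : ℕ) (hi : T i = some 0) :
    Tdop h T (i + 1) = Part.some w := by
  show (h (Encodable.encode (T i))).bind _ = _
  rw [hi, hc, Part.bind_some]


/-- There is a class of recursive languages in `[TxtItEx_C]_REC` but not in
`[TxtTdEx_C]_REC`. -/
theorem it_exC_not_td_exC :
    ∃ ℒ : Set (Set ℕ),
      ℒ ∈ LearnableREC PartComputable Itop ExC ∧
      ℒ ∉ LearnableREC PartComputable Tdop ExC := by
  refine ⟨{{0}, {0, 1}}, ?_⟩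
  -- obtain C-indices for {0} and {0,1}
  obtain ⟨c0, hc0⟩ := Nat.Partrec.Code.exists_code.mp (Partrec.nat_iff.mp chi0_comp.partrec)
  obtain ⟨c1, hc1⟩ := Nat.Partrec.Code.exists_code.mp (Partrec.nat_iff.mp chi1_comp.partrec)
  set E0 := Encodable.encode c0 with hE0
  set E1 := Encodable.encode c1 with hE1
  have hphi0 : ∀ x, phi E0 x = Part.some (chi0 x) := by
    intro x; rw [hE0, phi_encode, hc0]; rfl
  have hphi1 : ∀ x, phi E1 x = Part.some (chi1 x) := by
    intro x; rw [hE1, phi_encode, hc1]; rfl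
  have hCI0 : CIndex E0 := by
    intro x; rw [hphi0]
    by_cases hx : x = 0 <;> simp [chi0, hx]
  have hCI1 : CIndex E1 := by
    intro x; rw [hphi1]
    by_cases hx : x ≤ 1 <;> simp [chi1, hx]
  have hC0 : Cset E0 = {0} := by
    ext x
    simp only [Cset, Set.mem_setOf_eq, hphi0, Part.some_inj, Set.mem_singleton_iff, chi0]
    by_cases hx : x = 0 <;> simp [hx]
  have hC1 : Cset E1 = {0, 1} := by
    ext x
    simp only [Cset, Set.mem_setOf_eq, hphi1, Part.some_inj, chi1, Set.mem_insert_iff,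
      Set.mem_singleton_iff]
    by_cases hx : x ≤ 1 <;> simp [hx] <;> omega
  have hrec : IsRecClass ({{0}, {0, 1}} : Set (Set ℕ)) := by
    rintro L (hL | hL) <;> subst hL
    · exact ⟨fun x => decide (x = 0),
        Primrec.to_comp (Primrec.eq.comp Primrec.id (Primrec.const 0)).decide, by simp⟩
    · exact ⟨fun x => decide (x ≤ 1),
        Primrec.to_comp (Primrec.nat_le.comp Primrec.id (Primrec.const 1)).decide,
        by intro x; simp; omega⟩
  constructor
  · -- iterative learnability
    refine ⟨hrec, hIt E0 E1, hIt_partrec E0 E1, ?_⟩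
    intro L hL T hT
    rcases hL with hL | hL
    · -- L = {0}
      subst hL
      have hF : ∀ n, Fseq E0 E1 T n = E0 := by
        intro n
        induction n with
        | zero => rfl
        | succ n ih =>
            have hx : T n ≠ some 1 := by
              intro hx
              have : (1 : ℕ) ∈ content T := ⟨n, hx⟩
              rw [hT] at this
              simp at this
            simp [Fseq, hx, ih]
      refine ⟨0, ?_, E0, ?_, hCI0, by rw [hC0, hT]⟩
      · intro n _; rw [Itop_hIt, Itop_hIt, hF, hF]
      · rw [Itop_hIt, hF]
    · -- L = {0, 1}
      subst hL
      have h1 : (1 : ℕ) ∈ content T := by rw [hT]; simp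
      obtain ⟨m, hm⟩ := h1
      have hF : ∀ n, m + 1 ≤ n → Fseq E0 E1 T n = E1 := by
        intro n hn
        induction n with
        | zero => omega
        | succ n ih =>
            rcases Nat.lt_or_ge m n with h' | h'
            · have := ih (by omega)
              by_cases hx : T n = some 1 <;> simp [Fseq, hx, this]
            · have : m = n := by omega
              subst this
              simp [Fseq, hm]
      refine ⟨m + 1, ?_, E1, ?_, hCI1, by rw [hC1, hT]⟩
      · intro n hn; rw [Itop_hIt, Itop_hIt, hF n hn, hF (m + 1) le_rfl]
      · rw [Itop_hIt, hF (m + 1) le_rfl]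
  · -- not transductively learnable
    rintro ⟨-, h, -, hlearn⟩
    -- the all-zero text
    set T1 : Text := fun _ => some 0 with hT1def
    have hcontent1 : content T1 = {0} := by
      ext x
      constructor
      · rintro ⟨n, hn⟩
        have : (0 : ℕ) = x := by simpa [T1] using hn
        simp [← this]
      · rintro rfl; exact ⟨0, rfl⟩
    have hex1 := hlearn {0} (Or.inl rfl) T1 hcontent1
    obtain ⟨n₀, -, e, hpe, -, hce⟩ := hex1
    rw [hcontent1] at hce
    have hc0 : h (Encodable.encode (some 0 : Option ℕ)) = Part.some (e + 1) :=
      td_all_zero h n₀ e hpe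
    -- the text 1,0,0,0,...
    set T2 : Text := fun n => if n = 0 then some 1 else some 0 with hT2def
    have hcontent2 : content T2 = {0, 1} := by
      ext x
      constructor
      · rintro ⟨n, hn⟩
        rcases eq_or_ne n 0 with rfl | hne
        · have : (1 : ℕ) = x := by simpa [T2] using hn
          simp [← this]
        · have : (0 : ℕ) = x := by simpa [T2, hne] using hn
          simp [← this]
      · rintro (rfl | rfl)
        · exact ⟨1, by simp [T2]⟩
        · exact ⟨0, by simp [T2]⟩
    have hex2 := hlearn {0, 1} (Or.inr rfl) T2 hcontent2
    obtain ⟨m₀, hstab, e', hpe', -, hce'⟩ := hex2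
    rw [hcontent2] at hce'
    have hTd2 : ∀ i, 1 ≤ i → Tdop h T2 (i + 1) = Part.some e := by
      intro i hi
      exact td_step h e hc0 T2 i (by simp [T2]; omega)
    have hkey : Tdop h T2 (max m₀ 1 + 1) = Part.some e := hTd2 _ (le_max_right _ _)
    have hkey2 : Tdop h T2 (max m₀ 1 + 1) = Part.some e' := by
      rw [hstab (max m₀ 1 + 1) (le_trans (le_max_left _ _) (Nat.le_succ_of_le le_rfl)), hpe']
    have hee : e = e' := by
      have := hkey.symm.trans hkey2
      exact Part.some_inj.mp this
    subst hee
    have hsets : ({0} : Set ℕ) = {0, 1} := by rw [← hce, ← hce']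
    have : (1 : ℕ) ∈ ({0} : Set ℕ) := by rw [hsets]; simp
    simp at this


end InductiveInference
end
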